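/- Partition lemma for bounded time scales: Let 𝕋 be a bounded time scale with minimum 0 and maximum b ∈ 𝕋, and let δ > 0. Then there exist n ∈ ℕ and points 0 = t₀ < t₁ < ⋯ < t_n = b, all belonging to 𝕋, such that for each i < n either t_{i+1} − t_i ≤ δ, or t_{i+1} − t_i > δ and the open interval (t_i, t_{i+1}) contains no point of 𝕋 (i.e. t_{i+1} = σ(t_i)). -/

import Mathlib

def GoodPart (T : Set ℝ) (δ b : ℝ) : Prop :=
  ∃ (n : ℕ) (t : Fin (n + 1) → ℝ),
    t 0 = 0 ∧ t (Fin.last n) = b ∧ StrictMono t ∧ (∀ i, t i ∈ T) ∧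
    ∀ i : Fin n,
      t i.succ - t i.castSucc ≤ δ ∨
        (δ < t i.succ - t i.castSucc ∧
          ∀ s ∈ T, ¬(t i.castSucc < s ∧ s < t i.succ))

lemma GoodPart.extend {T : Set ℝ} {δ a q : ℝ} (h : GoodPart T δ a) (hq : q ∈ T)
    (haq : a < q)
    (hstep : q - a ≤ δ ∨ (δ < q - a ∧ ∀ s ∈ T, ¬(a < s ∧ s < q))) :
    GoodPart T δ q := by
  obtain ⟨n, t, h0, hl, hm, hT, hs⟩ := h
  refine ⟨n + 1, Fin.snoc t q, ?_, ?_, ?_, ?_, ?_⟩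
  · have : (0 : Fin (n + 2)) = Fin.castSucc 0 := rfl
    rw [this, Fin.snoc_castSucc, h0]
  · rw [Fin.snoc_last]
  · rw [Fin.strictMono_iff_lt_succ]
    intro i
    induction i using Fin.lastCases with
    | last =>
      rw [Fin.succ_last, Fin.snoc_last, Fin.snoc_castSucc, hl]
      exact haq
    | cast j =>
      rw [Fin.succ_castSucc, Fin.snoc_castSucc, Fin.snoc_castSucc]
      exact hm Fin.castSucc_lt_succ
  · intro i
    induction i using Fin.lastCases with
    | last => rw [Fin.snoc_last]; exact hq
    | cast j => rw [Fin.snoc_castSucc]; exact hT j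
  · intro i
    induction i using Fin.lastCases with
    | last =>
      rw [Fin.succ_last, Fin.snoc_last, Fin.snoc_castSucc, hl]
      exact hstep
    | cast j =>
      rw [Fin.succ_castSucc, Fin.snoc_castSucc, Fin.snoc_castSucc]
      exact hs j

lemma GoodPart.zero {T : Set ℝ} {δ : ℝ} (h0T : (0 : ℝ) ∈ T) : GoodPart T δ 0 :=
  ⟨0, fun _ => 0, rfl, rfl, by intro i j h; exact absurd h.le (by omega), fun _ => h0T, fun i => i.elim0⟩

lemma goodPart_aux {T : Set ℝ} (hcl : IsClosed T) (h0T : (0 : ℝ) ∈ T) {δ : ℝ}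
    (hδ : 0 < δ) : ∀ n : ℕ, ∀ b ∈ T, 0 ≤ b → b ≤ n * δ → GoodPart T δ b := by
  intro n
  induction n with
  | zero =>
    intro b hbT hb0 hbn
    have : b = 0 := le_antisymm (by simpa using hbn) hb0
    subst this
    exact GoodPart.zero h0T
  | succ n ih =>
    intro b hbT hb0 hbn
    rcases eq_or_lt_of_le hb0 with h | hb0'
    · exact h ▸ GoodPart.zero h0T
    rcases le_or_gt b δ with hbδ | hbδ
    · exact (GoodPart.zero h0T).extend hbT hb0' (Or.inl (by linarith))
    -- b > δ; let s = sup of T ∩ [0, b - δ]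
    set A : Set ℝ := T ∩ Set.Icc 0 (b - δ) with hA
    have hAne : A.Nonempty := ⟨0, h0T, le_refl 0, by linarith⟩
    have hAcl : IsClosed A := hcl.inter isClosed_Icc
    have hAbdd : BddAbove A := ⟨b - δ, fun x hx => hx.2.2⟩
    set s := sSup A with hsdef
    have hsA : s ∈ A := hAcl.csSup_mem hAne hAbdd
    have hsT : s ∈ T := hsA.1
    have hs0 : 0 ≤ s := hsA.2.1
    have hsb : s ≤ b - δ := hsA.2.2
    have hgood : GoodPart T δ s := ih s hsT hs0 (by push_cast at hbn; linarith)
    -- key fact: any point of T strictly between s and b is > b - δ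
    have hkey : ∀ x ∈ T, s < x → x < b → b - δ < x := by
      intro x hxT hsx hxb
      by_contra h
      push_neg at h
      have : x ∈ A := ⟨hxT, le_trans hs0 hsx.le, h⟩
      exact absurd (le_csSup hAbdd this) (not_le.mpr hsx)
    rcases le_or_gt (b - s) δ with hbs | hbs
    · exact hgood.extend hbT (by linarith) (Or.inl (by linarith))
    -- b - s > δ
    rcases Set.eq_empty_or_nonempty (T ∩ Set.Ioo s b) with hE | hE
    · refine hgood.extend hbT (by linarith) (Or.inr ⟨by linarith, ?_⟩)
      intro x hxT hx
      exact Set.eq_empty_iff_forall_notMem.mp hE x ⟨hxT, hx.1, hx.2⟩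
    · set q := sInf (T ∩ Set.Ioo s b) with hqdef
      have hbddB : BddBelow (T ∩ Set.Ioo s b) := ⟨s, fun x hx => hx.2.1.le⟩
      have hqT : q ∈ T := by
        have h1 : q ∈ closure (T ∩ Set.Ioo s b) := csInf_mem_closure hE hbddB
        have h2 : closure (T ∩ Set.Ioo s b) ⊆ T :=
          hcl.closure_subset_iff.mpr Set.inter_subset_left
        exact h2 h1
      have hqlb : b - δ ≤ q := le_csInf hE fun x hx => (hkey x hx.1 hx.2.1 hx.2.2).le
      obtain ⟨x0, hx0⟩ := hE
      have hqb : q < b := lt_of_le_of_lt (csInf_le hbddB hx0) hx0.2.2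
      have hsq : s < q := by linarith
      have hgap : ∀ x ∈ T, ¬(s < x ∧ x < q) := by
        intro x hxT hx
        have : x ∈ T ∩ Set.Ioo s b := ⟨hxT, hx.1, lt_trans hx.2 hqb⟩
        exact absurd (csInf_le hbddB this) (not_le.mpr hx.2)
      have hgoodq : GoodPart T δ q := by
        rcases le_or_gt (q - s) δ with h | h
        · exact hgood.extend hqT hsq (Or.inl h)
        · exact hgood.extend hqT hsq (Or.inr ⟨h, hgap⟩)
      exact hgoodq.extend hbT hqb (Or.inl (by linarith))

/-- Partition lemma for bounded time scales: for a time scale `T` with minimum `0` and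
maximum `b`, and any `δ > 0`, there is a finite partition `0 = t₀ < t₁ < ⋯ < tₙ = b`
with all points in `T` such that each step is either of length `≤ δ`, or of length `> δ`
with no point of `T` strictly inside the step (i.e. `t_{i+1} = σ(t_i)`). -/
theorem stmt_1 (T : Set ℝ) (hcl : IsClosed T) (b : ℝ) (h0T : (0 : ℝ) ∈ T) (hbT : b ∈ T)
    (hsub : T ⊆ Set.Icc 0 b) (δ : ℝ) (hδ : 0 < δ) :
    ∃ (n : ℕ) (t : Fin (n + 1) → ℝ),
      t 0 = 0 ∧ t (Fin.last n) = b ∧ StrictMono t ∧ (∀ i, t i ∈ T) ∧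
      ∀ i : Fin n,
        t i.succ - t i.castSucc ≤ δ ∨
          (δ < t i.succ - t i.castSucc ∧
            ∀ s ∈ T, ¬(t i.castSucc < s ∧ s < t i.succ)) := by
  have hb0 : 0 ≤ b := (hsub h0T).2
  have hbn : b ≤ ⌈b / δ⌉₊ * δ := by
    rcases le_or_gt b 0 with h | h
    · have : (0:ℝ) ≤ ⌈b / δ⌉₊ * δ := by positivity
      linarith
    · rw [← div_le_iff₀ hδ]
      exact Nat.le_ceil _
  exact goodPart_aux hcl h0T hδ ⌈b / δ⌉₊ b hbT hb0 hbn
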